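/- Let κ₁, κ₂ be real numbers with κ₁ > 0 and κ₂ < κ₁, set θ₁ = (κ₁ − κ₂)/κ₁, and define f(x) = x · ln(1 − κ₁ + (κ₁ − κ₂)/x). Suppose z ≥ 0 is a real number satisfying z·e^z − e^z = κ₁ − 1, and set x* = (κ₁ − κ₂)/(e^z − 1 + κ₁). Then 0 < x* ≤ θ₁ and f′(x*) = 0. -/

import Mathlib

/-- Closed-form critical point of Lemma 1. -/
theorem closed_form_critical_point
    (κ₁ κ₂ : ℝ) (hκ₁ : 0 < κ₁) (hκ : κ₂ < κ₁)
    (θ₁ : ℝ) (hθ₁ : θ₁ = (κ₁ - κ₂) / κ₁)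
    (z : ℝ) (hz : 0 ≤ z) (hroot : z * Real.exp z - Real.exp z = κ₁ - 1)
    (xstar : ℝ) (hxstar : xstar = (κ₁ - κ₂) / (Real.exp z - 1 + κ₁)) :
    0 < xstar ∧ xstar ≤ θ₁ ∧
      deriv (fun x : ℝ => x * Real.log (1 - κ₁ + (κ₁ - κ₂) / x)) xstar = 0 := by
  have hez : (1 : ℝ) ≤ Real.exp z := by
    simpa using Real.exp_le_exp.mpr hz
  have hc : 0 < κ₁ - κ₂ := by linarith
  have hden : 0 < Real.exp z - 1 + κ₁ := by linarith
  have hx : 0 < xstar := by rw [hxstar]; positivity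
  have hxle : xstar ≤ θ₁ := by
    rw [hxstar, hθ₁]
    apply div_le_div_of_nonneg_left hc.le hκ₁
    linarith
  refine ⟨hx, hxle, ?_⟩
  -- key algebraic facts
  have hcx : (κ₁ - κ₂) / xstar = Real.exp z - 1 + κ₁ := by
    rw [hxstar, div_div_cancel₀]
    positivity
  have hu : 1 - κ₁ + (κ₁ - κ₂) / xstar = Real.exp z := by
    rw [hcx]; ring
  have hupos : (0:ℝ) < Real.exp z := Real.exp_pos z
  have hxne : xstar ≠ 0 := ne_of_gt hx
  -- derivative computation
  have h1 := (hasDerivAt_inv hxne).const_mul (κ₁ - κ₂)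
  have h2 := h1.const_add (1 - κ₁)
  have h2' : HasDerivAt (fun x : ℝ => 1 - κ₁ + (κ₁ - κ₂) / x)
      (-((κ₁ - κ₂) * (xstar ^ 2)⁻¹)) xstar := by
    simpa [div_eq_mul_inv] using h2
  have hune : 1 - κ₁ + (κ₁ - κ₂) / xstar ≠ 0 := by rw [hu]; exact ne_of_gt hupos
  have h3 := (Real.hasDerivAt_log hune).comp xstar h2'
  have h4 := (hasDerivAt_id xstar).mul h3
  simp only [Function.comp, id_eq] at h4
  rw [show (fun x : ℝ => x * Real.log (1 - κ₁ + (κ₁ - κ₂) / x)) = (id * Real.log ∘ fun x => 1 - κ₁ + (κ₁ - κ₂) / x) from rfl, h4.deriv]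
  simp only [one_mul]
  rw [hu, Real.log_exp]
  have hze : z * Real.exp z = Real.exp z - 1 + κ₁ := by linarith
  have hxval : (κ₁ - κ₂) = xstar * (Real.exp z - 1 + κ₁) := by
    field_simp [ne_of_gt hden] at hcx ⊢
    linarith [hcx]
  field_simp
  nlinarith [hze, hxval, hx, hupos]
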